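/- The sub-block acceptance probability h_{ik} of Eq. (1) lies in [0,1]: Let T be a finite index set, (p_t)_{t∈T} and (q_t)_{t∈T} nonnegative reals with P := Σ_t p_t ≤ 1 and 0 < Q := Σ_t q_t ≤ 1, and K ≥ 1 an integer. Set A := Σ_{t∈T} q_t·(1 − min{p_t/q_t, 1})^K (summands with q_t = 0 taken as 0), B := Q·(1 − min{P/Q, 1})^K, and M := 1 − (1 − P)^K. Then 0 ≤ A − B ≤ M − Q + A; consequently, if M − Q + A > 0, the quantity h := (A − B)/(M − Q + A) satisfies 0 ≤ h ≤ 1. -/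

import Mathlib

/-- The sub-block acceptance probability `h_{ik}` of Eq. (1) lies in `[0,1]`:
with `A := Σ_t q_t·(1 − min{p_t/q_t, 1})^K`, `B := Q·(1 − min{P/Q, 1})^K` and
`M := 1 − (1 − P)^K`, one has `0 ≤ A − B ≤ M − Q + A`; consequently if
`M − Q + A > 0`, then `h := (A − B)/(M − Q + A) ∈ [0, 1]`. -/
theorem hik_valid {T : Type*} [Fintype T] (p q : T → ℝ)
    (hp : ∀ t, 0 ≤ p t) (hq : ∀ t, 0 ≤ q t)
    (hP1 : (∑ t, p t) ≤ 1) (hQ0 : 0 < ∑ t, q t) (hQ1 : (∑ t, q t) ≤ 1)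
    (K : ℕ) (hK : 1 ≤ K)
    (A B M : ℝ)
    (hA : A = ∑ t, q t * (1 - min (p t / q t) 1) ^ K)
    (hB : B = (∑ t, q t) * (1 - min ((∑ t, p t) / (∑ t, q t)) 1) ^ K)
    (hM : M = 1 - (1 - ∑ t, p t) ^ K) :
    0 ≤ A - B ∧ A - B ≤ M - (∑ t, q t) + A ∧
    (0 < M - (∑ t, q t) + A →
      0 ≤ (A - B) / (M - (∑ t, q t) + A) ∧ (A - B) / (M - (∑ t, q t) + A) ≤ 1) := by
  set P : ℝ := ∑ t, p t with hPdef
  set Q : ℝ := ∑ t, q t with hQdef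
  have hQne : Q ≠ 0 := ne_of_gt hQ0
  set f : ℝ → ℝ := fun x => (max (1 - x) 0) ^ K with hf
  -- rewrite 1 - min x 1 as max (1-x) 0
  have hminmax : ∀ x : ℝ, 1 - min x 1 = max (1 - x) 0 := by
    intro x
    rcases le_total x 1 with h | h
    · rw [min_eq_left h, max_eq_left (by linarith)]
    · rw [min_eq_right h, max_eq_right (by linarith)]
      ring
  -- convexity of f
  have hfconv : ConvexOn ℝ Set.univ f := by
    refine ⟨convex_univ, ?_⟩
    intro x _ y _ a b ha hb hab
    simp only [smul_eq_mul, hf]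
    have h1 : max (1 - (a * x + b * y)) 0 ≤ a * max (1 - x) 0 + b * max (1 - y) 0 := by
      apply max_le
      · have hxy : 1 - (a * x + b * y) = a * (1 - x) + b * (1 - y) := by
          nlinarith [hab]
        rw [hxy]
        gcongr
        · exact le_max_left _ _
        · exact le_max_left _ _
      · positivity
    calc (max (1 - (a * x + b * y)) 0) ^ K
        ≤ (a * max (1 - x) 0 + b * max (1 - y) 0) ^ K := by
          apply pow_le_pow_left₀ (le_max_right _ _) h1
      _ ≤ a * (max (1 - x) 0) ^ K + b * (max (1 - y) 0) ^ K := by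
          have := (convexOn_pow (𝕜 := ℝ) K).2
            (Set.mem_Ici.mpr (le_max_right (1 - x) 0))
            (Set.mem_Ici.mpr (le_max_right (1 - y) 0)) ha hb hab
          simpa [smul_eq_mul] using this
  -- f is antitone
  have hfanti : ∀ x y : ℝ, x ≤ y → f y ≤ f x := by
    intro x y hxy
    apply pow_le_pow_left₀ (le_max_right _ _)
    exact max_le_max (by linarith) le_rfl
  have hA' : A = ∑ t, q t * f (p t / q t) := by
    rw [hA]
    refine Finset.sum_congr rfl fun t _ => ?_
    rw [hminmax]
  have hB' : B = Q * f (P / Q) := by rw [hB, hminmax]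
  -- First inequality: B ≤ A via Jensen
  have hAB : B ≤ A := by
    have hw0 : ∀ t ∈ (Finset.univ : Finset T), 0 ≤ q t / Q :=
      fun t _ => div_nonneg (hq t) hQ0.le
    have hw1 : ∑ t, q t / Q = 1 := by
      rw [← Finset.sum_div, ← hQdef, div_self hQne]
    have hjensen := hfconv.map_sum_le (p := fun t => p t / q t) hw0 hw1
      (fun t _ => Set.mem_univ _)
    simp only [smul_eq_mul] at hjensen
    have hsum : ∑ t, q t / Q * (p t / q t)
        = (∑ t, if q t = 0 then (0:ℝ) else p t) / Q := by
      rw [Finset.sum_div]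
      refine Finset.sum_congr rfl fun t _ => ?_
      by_cases h : q t = 0
      · simp [h]
      · rw [if_neg h]; field_simp
    have hP' : (∑ t, if q t = 0 then (0:ℝ) else p t) ≤ P := by
      apply Finset.sum_le_sum
      intro t _
      by_cases h : q t = 0 <;> simp [h, hp t]
    have hstep1 : f (P / Q) ≤ f ((∑ t, if q t = 0 then (0:ℝ) else p t) / Q) := by
      apply hfanti
      gcongr
    have hstep2 : f ((∑ t, if q t = 0 then (0:ℝ) else p t) / Q)
        ≤ ∑ t, q t / Q * f (p t / q t) := by
      rw [← hsum]; exact hjensen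
    have hsum2 : ∑ t, q t / Q * f (p t / q t) = A / Q := by
      rw [hA', Finset.sum_div]
      refine Finset.sum_congr rfl fun t _ => ?_
      ring
    rw [hB']
    have : f (P / Q) ≤ A / Q := le_trans hstep1 (hstep2.trans_eq hsum2)
    calc Q * f (P / Q) ≤ Q * (A / Q) := by
          exact mul_le_mul_of_nonneg_left this hQ0.le
      _ = A := by field_simp
  -- Second inequality: Q - M ≤ B via two-point convexity
  have hQM : Q - M ≤ B := by
    have hconv2 := hfconv.2 (Set.mem_univ (0:ℝ)) (Set.mem_univ (P / Q))
      (show (0:ℝ) ≤ 1 - Q by linarith) hQ0.le (show (1 - Q) + Q = 1 by ring)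
    simp only [smul_eq_mul, mul_zero, zero_add] at hconv2
    have hPQ : Q * (P / Q) = P := by field_simp
    rw [hPQ] at hconv2
    have hf0 : f 0 = 1 := by simp [hf]
    have hfP : f P = (1 - P) ^ K := by
      rw [hf]
      have hPnn : (0:ℝ) ≤ ∑ t, p t := Finset.sum_nonneg fun t _ => hp t
      simp only []
      rw [max_eq_left (by linarith)]
    rw [hf0, hfP] at hconv2
    rw [hB', hM]
    linarith
  refine ⟨by linarith, by linarith, fun hpos => ?_⟩
  constructor
  · exact div_nonneg (by linarith) hpos.le
  · rw [div_le_one hpos]; linarith
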